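/- arXiv:0803.0045 — 4 statements merged into one kernel-verified Lean document; each statement's English description precedes it below -/
import Mathlib

section
/- Let X₁ ⊆ X₂ ⊆ ⋯ be an ascending sequence of locally compact Hausdorff topological spaces such that each inclusion Xₙ → X_{n+1} is continuous. Then the union X = ⋃ₙ Xₙ, equipped with the direct limit topology, is a Hausdorff topological space. -/
open TopologicalSpace Topology

/-- A pair of "good" separating sets. -/
def GoodPair {X α : Type*} [TopologicalSpace α] (v : α → X) (x y : X)
    (U V : Set α) : Prop :=
  IsOpen U ∧ IsOpen V ∧ x ∈ v '' U ∧ y ∈ v '' V ∧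
    IsCompact (closure U) ∧ IsCompact (closure V) ∧
    Disjoint (closure U) (closure V)

/-- Step lemma: push a good pair forward along a continuous map into a locally
compact Hausdorff space. -/
lemma goodPair_step {X α β : Type*} [TopologicalSpace α] [TopologicalSpace β]
    [T2Space β] [LocallyCompactSpace β] {vα : α → X} {vβ : β → X}
    (hinj : Function.Injective vα) {f : α → β} (hf : Continuous f)
    (hv : ∀ a, vβ (f a) = vα a) {x y : X} {U V : Set α}
    (hx : x ∈ vα '' U) (hy : y ∈ vα '' V)
    (hU : IsCompact (closure U)) (hV : IsCompact (closure V))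
    (hd : Disjoint (closure U) (closure V)) :
    ∃ U' V' : Set β, GoodPair vβ x y U' V' ∧ f '' U ⊆ U' ∧ f '' V ⊆ V' := by
  have hKL : Disjoint (f '' closure U) (f '' closure V) := by
    rw [Set.disjoint_left]
    rintro z ⟨a, ha, rfl⟩ ⟨b, hb, hab⟩
    have : vα b = vα a := by rw [← hv, ← hv, hab]
    exact Set.disjoint_left.mp hd ha (hinj this ▸ hb)
  obtain ⟨A, B, hA, hB, hKA, hLB, hAB⟩ :=
    SeparatedNhds.of_isCompact_isCompact (hU.image hf) (hV.image hf) hKL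
  obtain ⟨M, hM, hKM, hMA⟩ := exists_compact_between (hU.image hf) hA hKA
  obtain ⟨N, hN, hLN, hNB⟩ := exists_compact_between (hV.image hf) hB hLB
  have hclM : closure (interior M) ⊆ M := closure_minimal interior_subset hM.isClosed
  have hclN : closure (interior N) ⊆ N := closure_minimal interior_subset hN.isClosed
  refine ⟨interior M, interior N, ⟨isOpen_interior, isOpen_interior, ?_, ?_, ?_, ?_, ?_⟩,
    ?_, ?_⟩
  · obtain ⟨a, ha, rfl⟩ := hx
    exact ⟨f a, hKM ⟨a, subset_closure ha, rfl⟩, hv a⟩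
  · obtain ⟨b, hb, rfl⟩ := hy
    exact ⟨f b, hLN ⟨b, subset_closure hb, rfl⟩, hv b⟩
  · exact hM.of_isClosed_subset isClosed_closure hclM
  · exact hN.of_isClosed_subset isClosed_closure hclN
  · exact hAB.mono (hclM.trans hMA) (hclN.trans hNB)
  · exact fun z hz => hKM (Set.image_mono subset_closure hz)
  · exact fun z hz => hLN (Set.image_mono subset_closure hz)

/-- an ascending union of locally compact Hausdorff spaces with
continuous inclusion maps is Hausdorff in the direct limit topology. -/
theorem direct_limit_of_locally_compact_spaces_is_hausdorff
    {X : Type*} (s : ℕ → Set X) (hmono : Monotone s)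
    (hcover : ∀ x : X, ∃ n, x ∈ s n)
    (t : ∀ n, TopologicalSpace (s n))
    (hincl : ∀ ⦃n m : ℕ⦄ (h : n ≤ m),
      Continuous[t n, t m] (Set.inclusion (hmono h)))
    (hT2 : ∀ n, @T2Space (s n) (t n))
    (hlc : ∀ n, @LocallyCompactSpace (s n) (t n)) :
    @T2Space X (⨆ n, (t n).coinduced (Subtype.val : s n → X)) := by
  apply @T2Space.mk X (⨆ n, (t n).coinduced (Subtype.val : s n → X))
  intro x y hxy
  obtain ⟨n₁, hx1⟩ := hcover x
  obtain ⟨n₂, hy1⟩ := hcover y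
  set n₀ := max n₁ n₂ with hn₀
  have hx0 : x ∈ s n₀ := hmono (le_max_left _ _) hx1
  have hy0 : y ∈ s n₀ := hmono (le_max_right _ _) hy1
  -- the step, stated for the concrete topologies
  have hstep : ∀ (n m : ℕ) (hnm : n ≤ m) (U V : Set (s n)),
      x ∈ Subtype.val '' U → y ∈ Subtype.val '' V →
      @IsCompact _ (t n) (@closure _ (t n) U) →
      @IsCompact _ (t n) (@closure _ (t n) V) →
      Disjoint (@closure _ (t n) U) (@closure _ (t n) V) →
      ∃ U' V' : Set (s m), @GoodPair X _ (t m) Subtype.val x y U' V' ∧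
        Set.inclusion (hmono hnm) '' U ⊆ U' ∧
        Set.inclusion (hmono hnm) '' V ⊆ V' := by
    intro n m hnm U V hxU hyV hU hV hd
    letI := t n; letI := t m
    haveI := hT2 m; haveI := hlc m
    exact goodPair_step Subtype.val_injective (hincl hnm) (fun a => rfl)
      hxU hyV hU hV hd
  -- base pair at level n₀
  have hbase : ∃ U V : Set (s n₀), @GoodPair X _ (t n₀) Subtype.val x y U V := by
    letI := t n₀; haveI := hT2 n₀
    obtain ⟨U, V, h, -, -⟩ := hstep n₀ n₀ le_rfl {⟨x, hx0⟩} {⟨y, hy0⟩}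
      ⟨⟨x, hx0⟩, rfl, rfl⟩ ⟨⟨y, hy0⟩, rfl, rfl⟩
      (by simp only [closure_singleton]; exact isCompact_singleton)
      (by simp only [closure_singleton]; exact isCompact_singleton)
      (by
        rw [closure_singleton, closure_singleton, Set.disjoint_singleton_left,
          Set.mem_singleton_iff]
        exact fun h => hxy (congrArg Subtype.val h))
    exact ⟨U, V, h⟩
  obtain ⟨U₀, V₀, hg₀⟩ := hbase
  choose F G hFG hFs hGs using hstep
  -- the recursively defined sequence of good pairs
  let P : ℕ → Type _ := fun k =>
    {p : Set (s (n₀ + k)) × Set (s (n₀ + k)) //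
      @GoodPair X _ (t (n₀ + k)) Subtype.val x y p.1 p.2}
  let step1 : ∀ k, P k → P (k + 1) := fun k p =>
    ⟨(F (n₀ + k) (n₀ + (k + 1)) (by omega) p.1.1 p.1.2
        p.2.2.2.1 p.2.2.2.2.1 p.2.2.2.2.2.1 p.2.2.2.2.2.2.1 p.2.2.2.2.2.2.2,
      G (n₀ + k) (n₀ + (k + 1)) (by omega) p.1.1 p.1.2
        p.2.2.2.1 p.2.2.2.2.1 p.2.2.2.2.2.1 p.2.2.2.2.2.2.1 p.2.2.2.2.2.2.2),
      hFG _ _ _ _ _ _ _ _ _ _⟩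
  let seq : ∀ k, P k := fun k => Nat.rec ⟨(U₀, V₀), hg₀⟩ step1 k
  have hseq : ∀ k, seq (k + 1) = step1 k (seq k) := fun k => rfl
  -- monotonicity of the images in X
  have hmonU : ∀ k, Subtype.val '' (seq k).1.1 ⊆ Subtype.val '' (seq (k + 1)).1.1 := by
    intro k z hz
    obtain ⟨p, hp, rfl⟩ := hz
    have h1 := hFs (n₀ + k) (n₀ + (k + 1)) (by omega) (seq k).1.1 (seq k).1.2
      (seq k).2.2.2.1 (seq k).2.2.2.2.1 (seq k).2.2.2.2.2.1
      (seq k).2.2.2.2.2.2.1 (seq k).2.2.2.2.2.2.2 ⟨p, hp, rfl⟩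
    rw [hseq k]
    exact ⟨_, h1, rfl⟩
  have hmonV : ∀ k, Subtype.val '' (seq k).1.2 ⊆ Subtype.val '' (seq (k + 1)).1.2 := by
    intro k z hz
    obtain ⟨p, hp, rfl⟩ := hz
    have h1 := hGs (n₀ + k) (n₀ + (k + 1)) (by omega) (seq k).1.1 (seq k).1.2
      (seq k).2.2.2.1 (seq k).2.2.2.2.1 (seq k).2.2.2.2.2.1
      (seq k).2.2.2.2.2.2.1 (seq k).2.2.2.2.2.2.2 ⟨p, hp, rfl⟩
    rw [hseq k]
    exact ⟨_, h1, rfl⟩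
  have hchainU : ∀ {k l : ℕ}, k ≤ l →
      Subtype.val '' (seq k).1.1 ⊆ Subtype.val '' (seq l).1.1 :=
    fun {k l} h => monotone_nat_of_le_succ hmonU h
  have hchainV : ∀ {k l : ℕ}, k ≤ l →
      Subtype.val '' (seq k).1.2 ⊆ Subtype.val '' (seq l).1.2 :=
    fun {k l} h => monotone_nat_of_le_succ hmonV h
  -- the separating open sets in X
  refine ⟨⋃ k, Subtype.val '' (seq k).1.1, ⋃ k, Subtype.val '' (seq k).1.2,
    ?_, ?_, ?_, ?_, ?_⟩
  · rw [isOpen_iSup_iff]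
    intro n
    rw [isOpen_coinduced]
    letI := t n
    have : (Subtype.val : s n → X) ⁻¹' (⋃ k, Subtype.val '' (seq k).1.1) =
        ⋃ (k) (h : n ≤ n₀ + k), Set.inclusion (hmono h) ⁻¹' (seq k).1.1 := by
      ext p
      simp only [Set.mem_preimage, Set.mem_iUnion]
      constructor
      · rintro ⟨k, hk⟩
        refine ⟨max k n, by omega, ?_⟩
        have hk' : (p : X) ∈ Subtype.val '' (seq (max k n)).1.1 :=
          hchainU (le_max_left _ _) hk
        obtain ⟨q, hq, hval⟩ := hk'
        have : q = Set.inclusion (hmono (by omega : n ≤ n₀ + max k n)) p :=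
          Subtype.ext hval
        rwa [this] at hq
      · rintro ⟨k, h, hp⟩
        exact ⟨k, Set.inclusion (hmono h) p, hp, rfl⟩
    rw [this]
    exact isOpen_iUnion fun k => isOpen_iUnion fun h =>
      (hincl h).isOpen_preimage _ (seq k).2.1
  · rw [isOpen_iSup_iff]
    intro n
    rw [isOpen_coinduced]
    letI := t n
    have : (Subtype.val : s n → X) ⁻¹' (⋃ k, Subtype.val '' (seq k).1.2) =
        ⋃ (k) (h : n ≤ n₀ + k), Set.inclusion (hmono h) ⁻¹' (seq k).1.2 := by
      ext p
      simp only [Set.mem_preimage, Set.mem_iUnion]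
      constructor
      · rintro ⟨k, hk⟩
        refine ⟨max k n, by omega, ?_⟩
        have hk' : (p : X) ∈ Subtype.val '' (seq (max k n)).1.2 :=
          hchainV (le_max_left _ _) hk
        obtain ⟨q, hq, hval⟩ := hk'
        have : q = Set.inclusion (hmono (by omega : n ≤ n₀ + max k n)) p :=
          Subtype.ext hval
        rwa [this] at hq
      · rintro ⟨k, h, hp⟩
        exact ⟨k, Set.inclusion (hmono h) p, hp, rfl⟩
    rw [this]
    exact isOpen_iUnion fun k => isOpen_iUnion fun h =>
      (hincl h).isOpen_preimage _ (seq k).2.2.1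
  · exact Set.mem_iUnion.mpr ⟨0, (seq 0).2.2.2.1⟩
  · exact Set.mem_iUnion.mpr ⟨0, (seq 0).2.2.2.2.1⟩
  · rw [Set.disjoint_left]
    intro z hzA hzB
    obtain ⟨k, hk⟩ := Set.mem_iUnion.mp hzA
    obtain ⟨l, hl⟩ := Set.mem_iUnion.mp hzB
    have hk' : z ∈ Subtype.val '' (seq (max k l)).1.1 := hchainU (le_max_left _ _) hk
    have hl' : z ∈ Subtype.val '' (seq (max k l)).1.2 := hchainV (le_max_right _ _) hl
    obtain ⟨p, hp, rfl⟩ := hk'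
    obtain ⟨q, hq, hval⟩ := hl'
    have hpq : q = p := Subtype.ext hval
    letI := t (n₀ + max k l)
    exact Set.disjoint_left.mp (seq (max k l)).2.2.2.2.2.2.2
      (subset_closure hp) (subset_closure (hpq ▸ hq))
end

section
/- Let A ⊆ C([0,1], ℝ) be the unital normed algebra of all restrictions to [0,1] of real rational functions without poles in [0,1], with the supremum norm and pointwise operations. Then for v ∈ A, there exists a one-parameter group of the unit group A^× through v (i.e., a map γ : ℝ → A^× with γ(s+t) = γ(s)γ(t), γ(0) = 1, and derivative v at 0, given pointwise by γ(t)(x) = exp(t·v(x)) with γ(t) ∈ A for all t) only if v is a constant function. Concretely: if v ∈ A and e^{t v} ∈ A for all t ∈ ℝ (pointwise exponential on [0,1]), then v is constant. -/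
/-- `f : ℝ → ℝ` is (the restriction to `[0,1]` of) a rational function without
poles in `[0,1]`. -/
def IsRationalWithoutPolesOn01 (f : ℝ → ℝ) : Prop :=
  ∃ p q : Polynomial ℝ, (∀ x ∈ Set.Icc (0 : ℝ) 1, q.eval x ≠ 0) ∧
    ∀ x ∈ Set.Icc (0 : ℝ) 1, f x = p.eval x / q.eval x

open Polynomial

-- root multiplicity of a power
private lemma rootMult_pow (z : ℂ) (p : ℂ[X]) (hp : p ≠ 0) (n : ℕ) :
    (p ^ n).rootMultiplicity z = n * p.rootMultiplicity z := by
  induction n with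
  | zero => simp
  | succ k ih =>
    rw [pow_succ, Polynomial.rootMultiplicity_mul (mul_ne_zero (pow_ne_zero _ hp) hp), ih]
    ring

/-- A nonzero rational function over ℝ with n-th roots for all n ≥ 1 has constant
numerator and denominator. -/
private lemma key (r : RatFunc ℝ) (hr : r ≠ 0)
    (hroots : ∀ n : ℕ, 1 ≤ n → ∃ s : RatFunc ℝ, s ^ n = r) :
    r.num.natDegree = 0 ∧ r.denom.natDegree = 0 := by
  by_contra hcon
  set φ : Polynomial ℝ →+* Polynomial ℂ := Polynomial.mapRingHom (algebraMap ℝ ℂ) with hφ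
  have hinj : Function.Injective (algebraMap ℝ ℂ) := (algebraMap ℝ ℂ).injective
  set N : ℂ[X] := φ r.num with hN
  set D : ℂ[X] := φ r.denom with hD
  have hNne : N ≠ 0 := by
    simpa [hN, hφ, Polynomial.map_ne_zero_iff hinj] using RatFunc.num_ne_zero hr
  have hDne : D ≠ 0 := by
    simpa [hD, hφ, Polynomial.map_ne_zero_iff hinj] using r.denom_ne_zero
  -- N*D has positive degree
  have hdegN : N.natDegree = r.num.natDegree := Polynomial.natDegree_map_eq_of_injective hinj _
  have hdegD : D.natDegree = r.denom.natDegree := Polynomial.natDegree_map_eq_of_injective hinj _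
  have hpos : 0 < (N * D).natDegree := by
    rw [Polynomial.natDegree_mul hNne hDne, hdegN, hdegD]
    omega
  obtain ⟨z, hz⟩ := Complex.exists_root (f := N * D)
    (by rwa [Polynomial.natDegree_pos_iff_degree_pos] at hpos)
  have hzND : N.IsRoot z ∨ D.IsRoot z := by
    simpa [Polynomial.IsRoot, Polynomial.eval_mul, mul_eq_zero] using hz
  have hcop : IsCoprime N D := (RatFunc.isCoprime_num_denom r).map φ
  -- z is not a root of both
  have hnotboth : ¬ (N.IsRoot z ∧ D.IsRoot z) := by
    rintro ⟨h1, h2⟩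
    obtain ⟨a, b, hab⟩ := hcop
    have := congrArg (Polynomial.eval z) hab
    simp [Polynomial.IsRoot.def.mp h1, Polynomial.IsRoot.def.mp h2] at this
  set k : ℤ := (N.rootMultiplicity z : ℤ) - (D.rootMultiplicity z : ℤ) with hk
  have hkne : k ≠ 0 := by
    rcases hzND with h | h
    · have h1 : 0 < N.rootMultiplicity z := (Polynomial.rootMultiplicity_pos hNne).mpr h
      have h2 : D.rootMultiplicity z = 0 := by
        rw [Polynomial.rootMultiplicity_eq_zero_iff]
        intro hr2; exact absurd ⟨h, hr2⟩ hnotboth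
      omega
    · have h1 : 0 < D.rootMultiplicity z := (Polynomial.rootMultiplicity_pos hDne).mpr h
      have h2 : N.rootMultiplicity z = 0 := by
        rw [Polynomial.rootMultiplicity_eq_zero_iff]
        intro hr2; exact absurd ⟨hr2, h⟩ hnotboth
      omega
  -- every n divides k
  have hdvd : ∀ n : ℕ, 1 ≤ n → (n : ℤ) ∣ k := by
    intro n hn
    obtain ⟨s, hs⟩ := hroots n hn
    have hsne : s ≠ 0 := by
      rintro rfl
      rw [zero_pow (by omega)] at hs
      exact hr hs.symm
    -- polynomial identity: r.num * s.denom^n = s.num^n * r.denom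
    have hid : r.num * s.denom ^ n = s.num ^ n * r.denom := by
      rw [RatFunc.num_mul_eq_mul_denom_iff (pow_ne_zero _ s.denom_ne_zero)]
      rw [map_pow, map_pow, ← div_pow, RatFunc.num_div_denom, hs]
    have hid2 : N * φ s.denom ^ n = φ s.num ^ n * D := by
      have := congrArg φ hid
      simpa [map_mul, map_pow] using this
    have hsN : φ s.num ≠ 0 := by
      simpa [hφ, Polynomial.map_ne_zero_iff hinj] using RatFunc.num_ne_zero hsne
    have hsD : φ s.denom ≠ 0 := by
      simpa [hφ, Polynomial.map_ne_zero_iff hinj] using s.denom_ne_zero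
    have hmul := congrArg (Polynomial.rootMultiplicity z) hid2
    rw [Polynomial.rootMultiplicity_mul (mul_ne_zero hNne (pow_ne_zero _ hsD)),
      Polynomial.rootMultiplicity_mul (mul_ne_zero (pow_ne_zero _ hsN) hDne),
      rootMult_pow z _ hsD, rootMult_pow z _ hsN] at hmul
    refine ⟨((φ s.num).rootMultiplicity z : ℤ) - ((φ s.denom).rootMultiplicity z : ℤ), ?_⟩
    have hc : ((N.rootMultiplicity z : ℤ)) + n * ((φ s.denom).rootMultiplicity z : ℤ)
        = n * ((φ s.num).rootMultiplicity z : ℤ) + (D.rootMultiplicity z : ℤ) := by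
      exact_mod_cast hmul
    rw [hk]
    linear_combination hc
  obtain ⟨m, hm⟩ := hdvd (k.natAbs + 1) (by omega)
  have h1 : ((k.natAbs : ℤ) + 1) ∣ k := ⟨m, by push_cast at hm ⊢; linarith⟩
  have h2 : ((k.natAbs : ℤ) + 1) ∣ (k.natAbs : ℤ) := Int.dvd_natAbs.mpr h1
  have h3 := Int.le_of_dvd (by omega) h2
  omega

/-- in the normed algebra `A ⊆ C([0,1],ℝ)` of restrictions of
rational functions without poles in `[0,1]`, a one-parameter group through
`v ∈ A` (given pointwise by `γ(t)(x) = exp(t·v(x))` with `γ(t) ∈ A` for all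
`t`) exists only if `v` is constant: if `v ∈ A` and the pointwise exponential
`x ↦ exp(t·v(x))` lies in `A` for every `t ∈ ℝ`, then `v` is constant on
`[0,1]`. -/
theorem one_parameter_group_in_rational_algebra_only_for_constants
    (v : ℝ → ℝ) (hv : IsRationalWithoutPolesOn01 v)
    (hexp : ∀ t : ℝ, IsRationalWithoutPolesOn01 fun x => Real.exp (t * v x)) :
    ∃ c : ℝ, ∀ x ∈ Set.Icc (0 : ℝ) 1, v x = c := by
  have h01 : (0 : ℝ) ∈ Set.Icc (0 : ℝ) 1 := by norm_num
  have hIccInf : (Set.Icc (0 : ℝ) 1).Infinite := Set.Icc_infinite (by norm_num)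
  obtain ⟨p, q, hq, hf⟩ := hexp 1
  have hqne : q ≠ 0 := fun h => hq 0 h01 (by simp [h])
  have hpx : ∀ x ∈ Set.Icc (0 : ℝ) 1, p.eval x ≠ 0 := by
    intro x hx hpx0
    have := hf x hx
    rw [hpx0, zero_div] at this
    exact Real.exp_ne_zero _ this
  have hpne : p ≠ 0 := fun h => hpx 0 h01 (by simp [h])
  set φ := algebraMap (Polynomial ℝ) (RatFunc ℝ) with hφ
  set r : RatFunc ℝ := φ p / φ q with hr
  have hφp : φ p ≠ 0 := RatFunc.algebraMap_ne_zero hpne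
  have hφq : φ q ≠ 0 := RatFunc.algebraMap_ne_zero hqne
  have hrne : r ≠ 0 := div_ne_zero hφp hφq
  -- r has n-th roots for all n
  have hroots : ∀ n : ℕ, 1 ≤ n → ∃ s : RatFunc ℝ, s ^ n = r := by
    intro n hn
    obtain ⟨pn, qn, hqn, hfn⟩ := hexp (1 / n)
    have hqnne : qn ≠ 0 := fun h => hqn 0 h01 (by simp [h])
    have hφqn : φ qn ≠ 0 := RatFunc.algebraMap_ne_zero hqnne
    -- pointwise identity
    have hpt : ∀ x ∈ Set.Icc (0 : ℝ) 1,
        (pn.eval x) ^ n * q.eval x = (qn.eval x) ^ n * p.eval x := by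
      intro x hx
      have h1 := hfn x hx
      have h2 := hf x hx
      have hnn : (n : ℝ) ≠ 0 := by positivity
      have hpow : (pn.eval x / qn.eval x) ^ n = p.eval x / q.eval x := by
        rw [← h1, ← Real.exp_nat_mul, ← h2]
        congr 1
        field_simp
      rw [div_pow] at hpow
      have := div_eq_div_iff (pow_ne_zero n (hqn x hx)) (hq x hx) |>.mp hpow
      linarith [this]
    -- polynomial identity
    have hpoly : pn ^ n * q = qn ^ n * p := by
      apply Polynomial.eq_of_infinite_eval_eq
      apply hIccInf.mono
      intro x hx
      simpa [Polynomial.eval_mul, Polynomial.eval_pow] using hpt x hx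
    refine ⟨φ pn / φ qn, ?_⟩
    rw [div_pow, hr, div_eq_div_iff (pow_ne_zero n hφqn) hφq, ← map_pow, ← map_pow,
      ← map_mul, ← map_mul, hpoly, mul_comm]
  obtain ⟨hnum, hdenom⟩ := key r hrne hroots
  obtain ⟨a, ha⟩ := Polynomial.natDegree_eq_zero.mp hnum
  obtain ⟨b, hb⟩ := Polynomial.natDegree_eq_zero.mp hdenom
  have hbne : b ≠ 0 := by
    intro h
    exact r.denom_ne_zero (by rw [← hb, h, map_zero])
  have hane : a ≠ 0 := by
    intro h
    exact RatFunc.num_ne_zero hrne (by rw [← ha, h, map_zero])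
  -- C a * q = p * C b
  have hrel : r.num * q = p * r.denom :=
    (RatFunc.num_mul_eq_mul_denom_iff hqne).mpr hr
  refine ⟨Real.log (a / b), fun x hx => ?_⟩
  have hrelx : a * q.eval x = p.eval x * b := by
    have := congrArg (Polynomial.eval x) hrel
    rwa [← ha, ← hb, Polynomial.eval_mul, Polynomial.eval_mul, Polynomial.eval_C,
      Polynomial.eval_C] at this
  have hexpx : Real.exp (v x) = a / b := by
    have h2 := hf x hx
    simp only [one_mul] at h2
    rw [h2, div_eq_div_iff (hq x hx) hbne]
    linarith [hrelx]
  rw [← Real.log_exp (v x), hexpx]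
end

section
/- Let (Eₙ)_{n∈ℕ} and (Fₙ)_{n∈ℕ} be sequences of Hausdorff locally convex spaces, Uₙ ⊆ Eₙ be open subsets, and fₙ : Uₙ → Fₙ be continuous maps such that 0 ∈ Uₙ and fₙ(0) = 0 for all but finitely many n. Then ⊕ₙ Uₙ := (⊕ₙ Eₙ) ∩ ∏ₙ Uₙ is open in the locally convex direct sum ⊕ₙ Eₙ (with the box topology), and the map ⊕ₙ fₙ : ⊕ₙ Uₙ → ⊕ₙ Fₙ, (xₙ)ₙ ↦ (fₙ(xₙ))ₙ, is well-defined and continuous. -/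
open TopologicalSpace Topology

/-- given sequences of Hausdorff locally convex spaces `(Eₙ)`,
`(Fₙ)`, open sets `Uₙ ⊆ Eₙ` and continuous maps `fₙ : Uₙ → Fₙ` with `0 ∈ Uₙ`
and `fₙ(0) = 0` for all but finitely many `n`, the box `⊕ₙ Uₙ` is open in the
locally convex direct sum `⊕ₙ Eₙ` (box topology), and the map
`⊕ₙ fₙ : (xₙ)ₙ ↦ (fₙ(xₙ))ₙ` is a well-defined continuous map `⊕ₙ Uₙ → ⊕ₙ Fₙ`. -/
theorem direct_sum_of_continuous_maps_continuous
    {E F : ℕ → Type*}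
    [∀ n, AddCommGroup (E n)] [∀ n, Module ℝ (E n)] [∀ n, TopologicalSpace (E n)]
    [∀ n, IsTopologicalAddGroup (E n)] [∀ n, ContinuousSMul ℝ (E n)]
    [∀ n, T2Space (E n)] [∀ n, LocallyConvexSpace ℝ (E n)]
    [∀ n, AddCommGroup (F n)] [∀ n, Module ℝ (F n)] [∀ n, TopologicalSpace (F n)]
    [∀ n, IsTopologicalAddGroup (F n)] [∀ n, ContinuousSMul ℝ (F n)]
    [∀ n, T2Space (F n)] [∀ n, LocallyConvexSpace ℝ (F n)]
    (U : ∀ n, Set (E n)) (hUopen : ∀ n, IsOpen (U n))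
    (f : ∀ n, E n → F n) (hfc : ∀ n, ContinuousOn (f n) (U n))
    (hae : {n | ¬((0 : E n) ∈ U n ∧ f n 0 = 0)}.Finite)
    -- the box topologies on the full products
    (tPE : TopologicalSpace (∀ n, E n))
    (htPE : tPE = TopologicalSpace.generateFrom
      {S | ∃ V : ∀ n, Set (E n), (∀ n, IsOpen (V n)) ∧ S = Set.univ.pi V})
    (tPF : TopologicalSpace (∀ n, F n))
    (htPF : tPF = TopologicalSpace.generateFrom
      {S | ∃ V : ∀ n, Set (F n), (∀ n, IsOpen (V n)) ∧ S = Set.univ.pi V}) :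
    -- `⊕ₙ Uₙ` is open in `⊕ₙ Eₙ`
    IsOpen[TopologicalSpace.induced
        (Subtype.val : {g : ∀ n, E n // {n | g n ≠ 0}.Finite} → ∀ n, E n) tPE]
      {g : {g : ∀ n, E n // {n | g n ≠ 0}.Finite} | ∀ n, g.1 n ∈ U n} ∧
    -- well-definedness of `⊕ₙ fₙ`
    (∀ g : {g : ∀ n, E n // {n | g n ≠ 0}.Finite}, (∀ n, g.1 n ∈ U n) →
      {n | f n (g.1 n) ≠ 0}.Finite) ∧
    -- continuity of `⊕ₙ fₙ`
    ∃ Φ : {g : {g : ∀ n, E n // {n | g n ≠ 0}.Finite} // ∀ n, g.1 n ∈ U n} →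
        {h : ∀ n, F n // {n | h n ≠ 0}.Finite},
      (∀ g n, (Φ g).1 n = f n (g.1.1 n)) ∧
      Continuous[TopologicalSpace.induced (fun g => g.1.1) tPE,
        TopologicalSpace.induced Subtype.val tPF] Φ := by
  have hwd : ∀ g : {g : ∀ n, E n // {n | g n ≠ 0}.Finite}, (∀ n, g.1 n ∈ U n) →
      {n | f n (g.1 n) ≠ 0}.Finite := by
    intro g hg
    refine (g.2.union hae).subset ?_
    intro n hn
    by_contra h
    simp only [Set.mem_union, Set.mem_setOf_eq, not_or, not_not] at h
    obtain ⟨h1, h2⟩ := h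
    exact hn (by rw [h1, h2.2])
  refine ⟨?_, hwd, ?_⟩
  · refine ⟨Set.univ.pi U, ?_, ?_⟩
    · rw [htPE]
      exact TopologicalSpace.isOpen_generateFrom_of_mem ⟨U, hUopen, rfl⟩
    · ext g
      simp [Set.mem_pi]
  · refine ⟨fun g => ⟨fun n => f n (g.1.1 n), hwd g.1 g.2⟩, fun g n => rfl, ?_⟩
    rw [continuous_induced_rng]
    rw [htPF]
    rw [continuous_generateFrom_iff]
    rintro S ⟨V, hV, rfl⟩
    refine ⟨Set.univ.pi (fun n => U n ∩ f n ⁻¹' (V n)), ?_, ?_⟩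
    · rw [htPE]
      exact TopologicalSpace.isOpen_generateFrom_of_mem
        ⟨fun n => U n ∩ f n ⁻¹' (V n), fun n => (hfc n).isOpen_inter_preimage (hUopen n) (hV n), rfl⟩
    · ext g
      simp only [Set.mem_preimage, Set.mem_pi, Set.mem_univ, forall_true_left,
        Set.mem_inter_iff, Function.comp]
      exact ⟨fun h n => (h n).2, fun h n => ⟨g.2 n, h n⟩⟩
end

section
/- Let E be a Hausdorff locally convex space that is the locally convex direct limit of an ascending sequence of Hausdorff locally convex spaces E₁ ⊆ E₂ ⊆ ⋯ with continuous inclusions, and suppose E = ⋃ₙ Eₙ is compactly regular. Then the natural continuous linear map from the locally convex direct limit colim C([0,1], Eₙ) to C([0,1], E) (both spaces of continuous functions with the topology of uniform convergence) is a bijection; i.e., every continuous map [0,1] → E factors continuously through some Eₙ, and two such maps agree in the limit iff they agree in some Eₙ. -/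
open TopologicalSpace Topology

/-- let `E` be a Hausdorff locally convex space which is the
locally convex direct limit of an ascending sequence of Hausdorff locally
convex spaces `E₁ ⊆ E₂ ⊆ ⋯` with continuous inclusions, and suppose the union
is compactly regular.  Then the natural map `colim C([0,1],Eₙ) → C([0,1],E)`
is a bijection: every continuous map `[0,1] → E` factors continuously through
some `Eₙ`, and two continuous maps into `Eₙ` agree in `E` iff they agree (after
inclusion) in some `E_m`, `m ≥ n`. -/
theorem continuous_maps_into_compactly_regular_direct_limit_factor
    {E : Type*} [AddCommGroup E] [Module ℝ E]
    (p : ℕ → Submodule ℝ E) (hmono : Monotone p) (hcover : ∀ x : E, ∃ n, x ∈ p n)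
    (t : ∀ n, TopologicalSpace (p n))
    (htag : ∀ n, @IsTopologicalAddGroup (p n) (t n) _)
    (hsm : ∀ n, @ContinuousSMul ℝ (p n) _ _ (t n))
    (hT2 : ∀ n, @T2Space (p n) (t n))
    (hlc : ∀ n, @LocallyConvexSpace ℝ (p n) _ _ _ _ (t n))
    [tE : TopologicalSpace E] [IsTopologicalAddGroup E] [ContinuousSMul ℝ E]
    [LocallyConvexSpace ℝ E] [T2Space E]
    (hincl : ∀ n, Continuous[t n, tE] (fun x : p n => (x : E)))
    -- `tE` is the locally convex direct limit topology (finest locally convex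
    -- vector topology making all inclusions continuous)
    (hfinest : ∀ t' : TopologicalSpace E, @IsTopologicalAddGroup E t' _ →
      @ContinuousSMul ℝ E _ _ t' → @LocallyConvexSpace ℝ E _ _ _ _ t' →
      (∀ n, Continuous[t n, t'] (fun x : p n => (x : E))) → t' ≤ tE)
    -- compact regularity
    (hcompreg : ∀ K : Set E, IsCompact K → ∃ n, K ⊆ (p n : Set E) ∧
      @IsCompact (p n) (t n) ((fun x : p n => (x : E)) ⁻¹' K)) :
    -- surjectivity: every continuous `γ : [0,1] → E` factors continuously
    (∀ γ : Set.Icc (0 : ℝ) 1 → E, Continuous γ →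
      ∃ (n : ℕ) (γ' : Set.Icc (0 : ℝ) 1 → p n),
        (∀ s, ((γ' s : p n) : E) = γ s) ∧ Continuous[inferInstance, t n] γ') ∧
    -- injectivity: two maps agree in the limit iff they agree in some `E_m`
    ∀ (n : ℕ) (f g : Set.Icc (0 : ℝ) 1 → p n),
      Continuous[inferInstance, t n] f → Continuous[inferInstance, t n] g →
      ((∀ s, ((f s : p n) : E) = ((g s : p n) : E)) ↔
        ∃ (m : ℕ) (h : n ≤ m), ∀ s,
          Submodule.inclusion (hmono h) (f s) = Submodule.inclusion (hmono h) (g s)) := by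
  constructor
  · intro γ hγ
    obtain ⟨n, hK, hKc⟩ := hcompreg (Set.range γ) (isCompact_range hγ)
    letI := t n
    refine ⟨n, fun s => ⟨γ s, hK (Set.mem_range_self s)⟩, fun s => rfl, ?_⟩
    set K' : Set (p n) := (fun x : p n => (x : E)) ⁻¹' Set.range γ with hK'
    haveI hcs : CompactSpace K' := isCompact_iff_compactSpace.mp hKc
    have hφ : Continuous (fun x : K' => ((x : p n) : E)) :=
      (hincl n).comp continuous_subtype_val
    have hinj : Function.Injective (fun x : K' => ((x : p n) : E)) := by
      intro a b hab
      exact Subtype.ext (Subtype.ext hab)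
    have hemb := hφ.isClosedEmbedding hinj
    have hδ : Continuous (fun s : Set.Icc (0 : ℝ) 1 =>
        (⟨⟨γ s, hK (Set.mem_range_self s)⟩, Set.mem_range_self s⟩ : K')) := by
      rw [hemb.isEmbedding.continuous_iff]
      exact hγ
    exact continuous_subtype_val.comp hδ
  · intro n f g hf hg
    constructor
    · intro h
      exact ⟨n, le_rfl, fun s => congrArg _ (Subtype.ext (h s))⟩
    · rintro ⟨m, hm, h⟩ s
      simpa using congrArg Subtype.val (h s)
end
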